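/- Let w ≥ 2 and l ≥ 1 be integers. Then Σ_{k ∣ l} μ(k) · (−1)^{(k−1)·l·w/k} · C((l/k)(w−1)−1, (l/k)−1) = Σ_{d ∣ l} μ(l/d) · (−1)^{(w−2)(l−d)} · C(d(w−1)−1, d−1). Equivalently, the multiple cover contribution contr^BPS(l,C) := Σ_{k ∣ l} ((−1)^{(k−1)·l·w/k}/k²) μ(k) · (1/(l/k)²) C((l/k)(w−1)−1, (l/k)−1) equals the l-th generalized Donaldson–Thomas invariant DT_l^{(w−1)} = (1/l²) Σ_{d ∣ l} μ(l/d) (−1)^{(w−2)(l−d)} C(d(w−1)−1, d−1) of the (w−1)-loop quiver. -/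

import Mathlib

lemma aux_sign {R : Type*} [Monoid R] [HasDistribNeg R] (w k d : ℕ) (hw : 2 ≤ w) :
    ((-1 : R)) ^ ((k - 1) * d * w) = (-1) ^ ((w - 2) * (d * k - d)) := by
  obtain ⟨w', rfl⟩ : ∃ w', w = w' + 2 := ⟨w - 2, by omega⟩
  have h1 : d * k - d = d * (k - 1) := by
    cases k with
    | zero => simp
    | succ n => simp [Nat.mul_succ]
  have h2 : (k - 1) * d * (w' + 2) = (w' + 2 - 2) * (d * (k - 1)) + 2 * ((k - 1) * d) := by
    simp; ring
  simp [h1, h2, pow_add, pow_mul, neg_one_sq]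

/-- Proposition 6.3: the multiple cover contribution to the log BPS number
of an integral nodal rational curve of tangency `w = C.E ≥ 2` equals the
`l`-th generalized DT invariant of the `(w-1)`-loop quiver; first in the
`l²`-cleared integral form, then in the original rational form. -/
theorem stmt_4 (w l : ℕ) (hw : 2 ≤ w) (hl : 1 ≤ l) :
    (∑ k ∈ l.divisors,
        (ArithmeticFunction.moebius k : ℤ) * (-1) ^ ((k - 1) * (l / k) * w) *
          (Nat.choose ((l / k) * (w - 1) - 1) (l / k - 1) : ℤ)
      = ∑ d ∈ l.divisors,
        (ArithmeticFunction.moebius (l / d) : ℤ) * (-1) ^ ((w - 2) * (l - d)) *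
          (Nat.choose (d * (w - 1) - 1) (d - 1) : ℤ))
    ∧
    (∑ k ∈ l.divisors,
        ((-1 : ℚ) ^ ((k - 1) * (l / k) * w) / (k : ℚ) ^ 2) *
          ((ArithmeticFunction.moebius k : ℤ) : ℚ) *
          ((1 : ℚ) / (((l / k : ℕ) : ℚ)) ^ 2) *
          (Nat.choose ((l / k) * (w - 1) - 1) (l / k - 1) : ℚ)
      = (1 / (l : ℚ) ^ 2) *
        ∑ d ∈ l.divisors,
          ((ArithmeticFunction.moebius (l / d) : ℤ) : ℚ) *
            (-1 : ℚ) ^ ((w - 2) * (l - d)) *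
            (Nat.choose (d * (w - 1) - 1) (d - 1) : ℚ)) := by
  have hl0 : l ≠ 0 := by omega
  have h1 : (∑ k ∈ l.divisors,
        (ArithmeticFunction.moebius k : ℤ) * (-1) ^ ((k - 1) * (l / k) * w) *
          (Nat.choose ((l / k) * (w - 1) - 1) (l / k - 1) : ℤ)
      = ∑ d ∈ l.divisors,
        (ArithmeticFunction.moebius (l / d) : ℤ) * (-1) ^ ((w - 2) * (l - d)) *
          (Nat.choose (d * (w - 1) - 1) (d - 1) : ℤ)) := by
    refine Finset.sum_nbij' (fun k => l / k) (fun d => l / d) ?_ ?_ ?_ ?_ ?_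
    · intro k hk
      rw [Nat.mem_divisors] at *
      exact ⟨Nat.div_dvd_of_dvd hk.1, hl0⟩
    · intro d hd
      rw [Nat.mem_divisors] at *
      exact ⟨Nat.div_dvd_of_dvd hd.1, hl0⟩
    · intro k hk
      exact Nat.div_div_self (Nat.mem_divisors.mp hk).1 hl0
    · intro d hd
      exact Nat.div_div_self (Nat.mem_divisors.mp hd).1 hl0
    · intro k hk
      rw [Nat.mem_divisors] at hk
      rw [Nat.div_div_self hk.1 hl0]
      congr 1
      congr 1
      have hdk : (l / k) * k = l := Nat.div_mul_cancel hk.1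
      have := aux_sign (R := ℤ) w k (l / k) hw
      rw [hdk] at this
      exact this
  refine ⟨h1, ?_⟩
  have h1' : (∑ k ∈ l.divisors,
        ((ArithmeticFunction.moebius k : ℤ) : ℚ) * (-1) ^ ((k - 1) * (l / k) * w) *
          (Nat.choose ((l / k) * (w - 1) - 1) (l / k - 1) : ℚ)
      = ∑ d ∈ l.divisors,
        ((ArithmeticFunction.moebius (l / d) : ℤ) : ℚ) * (-1) ^ ((w - 2) * (l - d)) *
          (Nat.choose (d * (w - 1) - 1) (d - 1) : ℚ)) := by
    exact_mod_cast h1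
  rw [← h1', Finset.mul_sum]
  apply Finset.sum_congr rfl
  intro k hk
  rw [Nat.mem_divisors] at hk
  have hk0 : k ≠ 0 := by
    rintro rfl; exact hl0 (Nat.eq_zero_of_zero_dvd hk.1)
  have hd0 : l / k ≠ 0 := Nat.div_ne_zero_iff.mpr ⟨hk0, Nat.le_of_dvd (by omega) hk.1⟩
  have hmul : (k : ℚ) * ((l / k : ℕ) : ℚ) = (l : ℚ) := by
    exact_mod_cast Nat.mul_div_cancel' hk.1
  have hkq : (k : ℚ) ≠ 0 := Nat.cast_ne_zero.mpr hk0
  have hdq : ((l / k : ℕ) : ℚ) ≠ 0 := Nat.cast_ne_zero.mpr hd0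
  rw [← hmul]
  field_simp
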